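/- Let v_i be an internal vertex of the shortest s-t path P_G(s,t), and let T_1(v_i), T_2(v_i), F(v_i) be the parts of T_s \ {v_i} as defined. Then for all x ∈ T_1(v_i), d_{G \ v_i}(s, x) = d_G(s, x), and for all y ∈ T_2(v_i), d_{G \ v_i}(y, t) = d_G(y, t). -/

import Mathlib

open Classical SimpleGraph

noncomputable section

variable {V : Type*}

/-- Total weight of a walk, summing `w` over its darts. -/
def walkWeight (G : SimpleGraph V) (w : V → V → ℝ) {u v : V} (p : G.Walk u v) : ℝ :=
  (p.darts.map fun d => w d.fst d.snd).sum

/-- Weighted shortest-path distance: infimum of walk weights. -/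
def wdist (G : SimpleGraph V) (w : V → V → ℝ) (u v : V) : ℝ :=
  sInf {r | ∃ p : G.Walk u v, walkWeight G w p = r}

/-- The graph obtained by deleting a set of vertices (kept on the same vertex type). -/
def delVerts (G : SimpleGraph V) (S : Set V) : SimpleGraph V where
  Adj a b := G.Adj a b ∧ a ∉ S ∧ b ∉ S
  symm := ⟨fun a b h => ⟨h.1.symm, h.2.2, h.2.1⟩⟩
  loopless := ⟨fun a h => G.loopless.irrefl a h.1⟩

/-- `u` is in the subtree of `T` rooted at the `k`-th vertex of the path `vp`. -/
def inSub (T : SimpleGraph V) (vp : ℕ → V) (k : ℕ) (u : V) : Prop :=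
  k = 0 ∨ (T.deleteEdges {s(vp (k-1), vp k)}).Reachable (vp k) u

/-- The label of a vertex: the largest `k ≤ l` with `u` in the subtree rooted at `vp k`. -/
def label (T : SimpleGraph V) (vp : ℕ → V) (l : ℕ) (u : V) : ℕ :=
  sSup {k | k ≤ l ∧ inSub T vp k u}

section Aux

variable {G : SimpleGraph V} {w : V → V → ℝ}

@[simp] lemma walkWeight_nil {u : V} : walkWeight G w (.nil : G.Walk u u) = 0 := rfl

@[simp] lemma walkWeight_cons {u v x : V} (h : G.Adj u v) (p : G.Walk v x) :
    walkWeight G w (.cons h p) = w u v + walkWeight G w p := by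
  simp [walkWeight]

lemma walkWeight_append {u v x : V} (p : G.Walk u v) (q : G.Walk v x) :
    walkWeight G w (p.append q) = walkWeight G w p + walkWeight G w q := by
  simp [walkWeight, Walk.darts_append]

lemma walkWeight_reverse (hws : ∀ a b, w a b = w b a) {u v : V} (p : G.Walk u v) :
    walkWeight G w p.reverse = walkWeight G w p := by
  induction p with
  | nil => rfl
  | cons h p ih =>
    simp [Walk.reverse_cons, walkWeight_append, ih, hws]
    ring

lemma walkWeight_nonneg (hw0 : ∀ a b, G.Adj a b → 0 ≤ w a b) {u v : V} (p : G.Walk u v) :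
    0 ≤ walkWeight G w p := by
  induction p with
  | nil => simp
  | cons h p ih => simpa using add_nonneg (hw0 _ _ h) ih

lemma wdist_le (hw0 : ∀ a b, G.Adj a b → 0 ≤ w a b) {u v : V} (p : G.Walk u v) :
    wdist G w u v ≤ walkWeight G w p := by
  apply csInf_le
  · exact ⟨0, by rintro r ⟨q, rfl⟩; exact walkWeight_nonneg hw0 q⟩
  · exact ⟨p, rfl⟩

lemma le_wdist {c : ℝ} {u v : V} (p0 : G.Walk u v)
    (h : ∀ q : G.Walk u v, c ≤ walkWeight G w q) : c ≤ wdist G w u v := by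
  refine le_csInf ⟨_, ⟨p0, rfl⟩⟩ ?_
  rintro r ⟨q, rfl⟩; exact h q

lemma wdist_symm (hw0 : ∀ a b, G.Adj a b → 0 ≤ w a b) (hws : ∀ a b, w a b = w b a)
    {u v : V} (p0 : G.Walk u v) : wdist G w u v = wdist G w v u := by
  apply le_antisymm
  · exact le_wdist p0.reverse fun q => by
      simpa [walkWeight_reverse hws] using wdist_le hw0 q.reverse
  · exact le_wdist p0 fun q => by
      simpa [walkWeight_reverse hws] using wdist_le hw0 q.reverse

lemma wdist_triangle (hw0 : ∀ a b, G.Adj a b → 0 ≤ w a b) {u m v : V}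
    (p1 : G.Walk u m) (p2 : G.Walk m v) :
    wdist G w u v ≤ wdist G w u m + wdist G w m v := by
  have key : ∀ q2 : G.Walk m v, wdist G w u v - walkWeight G w q2 ≤ wdist G w u m := by
    intro q2
    apply le_wdist p1
    intro q1
    have := wdist_le hw0 (q1.append q2)
    rw [walkWeight_append] at this
    linarith
  have : wdist G w u v - wdist G w u m ≤ wdist G w m v := by
    apply le_wdist p2
    intro q2
    have := key q2
    linarith
  linarith

lemma walkWeight_dropUntil_le [DecidableEq V] (hw0 : ∀ a b, G.Adj a b → 0 ≤ w a b)
    {u v x : V} (p : G.Walk u v) (hx : x ∈ p.support) :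
    walkWeight G w (p.dropUntil x hx) ≤ walkWeight G w p := by
  have := Walk.take_spec p hx
  have h2 : walkWeight G w ((p.takeUntil x hx).append (p.dropUntil x hx)) = walkWeight G w p := by
    rw [this]
  rw [walkWeight_append] at h2
  have := walkWeight_nonneg hw0 (p.takeUntil x hx)
  linarith

lemma walkWeight_bypass_le [DecidableEq V] (hw0 : ∀ a b, G.Adj a b → 0 ≤ w a b)
    {u v : V} (p : G.Walk u v) : walkWeight G w p.bypass ≤ walkWeight G w p := by
  induction p with
  | nil => simp [Walk.bypass]
  | cons h p ih =>
    rw [Walk.bypass]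
    split_ifs with hs
    · have h0 := hw0 _ _ h
      have h1 := walkWeight_dropUntil_le hw0 _ hs
      simp only [walkWeight_cons]
      linarith
    · simp only [walkWeight_cons]
      linarith

lemma tree_path_weight {T : SimpleGraph V} (hT : T.IsTree)
    (hw0 : ∀ a b, T.Adj a b → 0 ≤ w a b) {u v : V} {q : T.Walk u v} (hq : q.IsPath) :
    walkWeight T w q = wdist T w u v := by
  classical
  apply le_antisymm
  · apply le_wdist q
    intro q2
    have hbp : q2.bypass = q := (hT.existsUnique_path u v).unique q2.bypass_isPath hq
    calc walkWeight T w q = walkWeight T w q2.bypass := by rw [hbp]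
      _ ≤ walkWeight T w q2 := walkWeight_bypass_le hw0 q2
  · exact wdist_le hw0 q

lemma split_walk {a b : V} (p : G.Walk a b) (j : ℕ) (hj : j ≤ p.length) :
    ∃ (q1 : G.Walk a (p.getVert j)) (q2 : G.Walk (p.getVert j) b),
      q1.append q2 = p ∧ q1.length = j := by
  induction p generalizing j with
  | nil => exact ⟨.nil, .nil, rfl, by simp [Nat.le_zero.mp hj]⟩
  | @cons u x v h p ih =>
    cases j with
    | zero => exact ⟨.nil, .cons h p, rfl, rfl⟩
    | succ j =>
      obtain ⟨q1, q2, hq, hl⟩ := ih j (by simpa using hj)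
      exact ⟨.cons h q1, q2, by simp [Walk.cons_append, hq], by simp [hl]⟩

lemma split_shortest (hw0 : ∀ a b, G.Adj a b → 0 ≤ w a b) {a m b : V}
    (q1 : G.Walk a m) (q2 : G.Walk m b)
    (hmin : walkWeight G w (q1.append q2) = wdist G w a b) :
    walkWeight G w q1 = wdist G w a m ∧ walkWeight G w q2 = wdist G w m b := by
  rw [walkWeight_append] at hmin
  have h1 : wdist G w a m ≤ walkWeight G w q1 := wdist_le hw0 q1
  have h2 : wdist G w m b ≤ walkWeight G w q2 := wdist_le hw0 q2
  have k1 : wdist G w a b - walkWeight G w q2 ≤ wdist G w a m := by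
    apply le_wdist q1
    intro r1
    have := wdist_le hw0 (r1.append q2)
    rw [walkWeight_append] at this
    linarith
  have k2 : wdist G w a b - walkWeight G w q1 ≤ wdist G w m b := by
    apply le_wdist q2
    intro r2
    have := wdist_le hw0 (q1.append r2)
    rw [walkWeight_append] at this
    linarith
  constructor <;> linarith

/-- Transfer a walk along a subgraph relation, preserving weight and support. -/
lemma walk_mapLe {H : SimpleGraph V} (hle : H ≤ G) {a b : V} (p : H.Walk a b) :
    ∃ q : G.Walk a b, walkWeight G w q = walkWeight H w p ∧ q.support = p.support := by
  induction p with
  | nil => exact ⟨.nil, rfl, rfl⟩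
  | cons h p ih =>
    obtain ⟨q, hw', hs⟩ := ih
    exact ⟨.cons (hle h) q, by simp [hw'], by simp [hs]⟩

/-- A walk avoiding `S` lives in `delVerts G S`. -/
lemma walk_avoid {a b : V} (S : Set V) (p : G.Walk a b) (h : ∀ z ∈ p.support, z ∉ S) :
    ∃ q : (delVerts G S).Walk a b,
      walkWeight (delVerts G S) w q = walkWeight G w p ∧ q.support = p.support := by
  induction p with
  | nil => exact ⟨.nil, rfl, rfl⟩
  | @cons u x v hadj p ih =>
    obtain ⟨q, hw', hs⟩ := ih (fun z hz => h z (by simp [hz]))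
    refine ⟨.cons (show (delVerts G S).Adj u x from ⟨hadj, h u (Walk.start_mem_support _), h x (by rw [Walk.support_cons]; exact List.mem_cons_of_mem _ p.start_mem_support)⟩) q,
      by simp [hw'], by simp [hs]⟩

lemma delVerts_le (S : Set V) : delVerts G S ≤ G := fun _ _ h => h.1

lemma delVerts_mono {H : SimpleGraph V} (hle : H ≤ G) (S : Set V) :
    delVerts H S ≤ delVerts G S := fun _ _ h => ⟨hle h.1, h.2⟩

lemma delVerts_support_avoid {S : Set V} {a b : V} (p : (delVerts G S).Walk a b)
    (ha : a ∉ S) : ∀ z ∈ p.support, z ∉ S := by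
  induction p with
  | nil => intro z hz; simp at hz; subst hz; exact ha
  | @cons u x v hadj p ih =>
    intro z hz
    rcases (by simpa using hz : z = u ∨ z ∈ p.support) with rfl | hz'
    · exact ha
    · exact ih hadj.2.2 z hz'

lemma isPath_append_of_inter {a m b : V} {p : G.Walk a m} {q : G.Walk m b}
    (hp : p.IsPath) (hq : q.IsPath)
    (hdis : ∀ z ∈ p.support, z ∈ q.support → z = m) : (p.append q).IsPath := by
  rw [Walk.isPath_def, Walk.support_append, List.nodup_append]
  refine ⟨hp.support_nodup, ?_, ?_⟩
  · have := hq.support_nodup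
    rw [Walk.support_eq_cons q] at this
    exact this.of_cons
  · intro z hz z' hz' hzz
    subst hzz
    have hmem : z ∈ q.support := by
      rw [Walk.support_eq_cons q]; exact List.mem_cons_of_mem _ hz'
    have : z = m := hdis z hz hmem
    subst this
    have := hq.support_nodup
    rw [Walk.support_eq_cons q] at this
    exact List.Nodup.notMem this hz'

end Aux

lemma walk_transfer' {G H : SimpleGraph V} {w : V → V → ℝ} {a b : V} (p : G.Walk a b)
    (hp : ∀ e ∈ p.edges, e ∈ H.edgeSet) :
    ∃ q : H.Walk a b, walkWeight H w q = walkWeight G w p ∧ q.support = p.support := by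
  induction p with
  | nil => exact ⟨.nil, rfl, rfl⟩
  | @cons u x v h p ih =>
    obtain ⟨q, hw', hs⟩ := ih (fun e he => hp e (by simp [Walk.edges_cons, he]))
    exact ⟨.cons ((SimpleGraph.mem_edgeSet H).mp (hp s(u, x) (by simp))) q,
      by simp [hw'], by simp [hs]⟩

lemma isPath_length_zero {G : SimpleGraph V} {a b : V} (p : G.Walk a b)
    (hp : p.IsPath) (h : a = b) : p.length = 0 := by
  subst h
  cases p with
  | nil => rfl
  | cons hadj q =>
    exfalso
    have := hp.support_nodup
    rw [Walk.support_cons] at this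
    exact (List.nodup_cons.mp this).1 q.end_mem_support

theorem stmt15 {V : Type*}
    (G : SimpleGraph V) (hconn : G.Connected) (w : V → V → ℝ)
    (hw : ∀ a b, G.Adj a b → 0 < w a b) (hws : ∀ a b, w a b = w b a)
    (s t : V) (p : G.Walk s t) (hp : p.IsPath)
    (hps : walkWeight G w p = wdist G w s t)
    (T : SimpleGraph V) (hTG : T ≤ G) (hT : T.IsTree)
    (hSPT : ∀ v, wdist T w s v = wdist G w s v)
    (hPT : ∀ e ∈ p.edges, e ∈ T.edgeSet)
    (i : ℕ) (hi1 : 1 ≤ i) (hil : i + 1 ≤ p.length)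
    :
    (∀ x, (delVerts T {p.getVert i}).Reachable s x →
      wdist (delVerts G {p.getVert i}) w s x = wdist G w s x) ∧
    (∀ y, (delVerts T {p.getVert i}).Reachable (p.getVert (i+1)) y →
      wdist (delVerts G {p.getVert i}) w y t = wdist G w y t) := by
  classical
  set v := p.getVert i with hv
  have hw0 : ∀ a b, G.Adj a b → 0 ≤ w a b := fun a b h => (hw a b h).le
  have hw0T : ∀ a b, T.Adj a b → 0 ≤ w a b := fun a b h => (hw a b (hTG h)).le
  have hw0GD : ∀ a b, (delVerts G {v}).Adj a b → 0 ≤ w a b := fun a b h => hw0 a b h.1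
  -- split p at i
  obtain ⟨q1, q2, hq12, hq1len⟩ := split_walk p i (le_trans (Nat.le_succ i) hil)
  have hq2nn : ¬ q2.Nil := by
    rw [Walk.not_nil_iff_lt_length]
    have := congrArg Walk.length hq12
    rw [Walk.length_append, hq1len] at this
    omega
  obtain ⟨x', hadj, q2', rfl⟩ := Walk.not_nil_iff.mp hq2nn
  ·
    have hxu : p.getVert (i + 1) = x' := by
      conv_lhs => rw [← hq12]
      rw [Walk.getVert_append, hq1len, if_neg (by omega)]
      have h1 : i + 1 - i = 1 := by omega
      rw [h1]
      simp [Walk.getVert_cons_succ, Walk.getVert_zero]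
    -- nodup decomposition
    have hnd : (q1.support ++ q2'.support).Nodup := by
      have hnd0 := hp.support_nodup
      rw [← hq12, Walk.support_append, Walk.support_cons] at hnd0
      simpa using hnd0
    rw [List.nodup_append] at hnd
    obtain ⟨hnd1, hnd2, hdisj⟩ := hnd
    have hvq1 : v ∈ q1.support := q1.end_mem_support
    have hvq2' : v ∉ q2'.support := fun hz => hdisj v hvq1 v hz rfl
    have hxq2' : x' ∈ q2'.support := q2'.start_mem_support
    have hxq1 : x' ∉ q1.support := fun h => hdisj x' h x' hxq2' rfl
    have hvx : v ≠ x' := fun h => hvq2' (h ▸ hxq2')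
    have hq1path : q1.IsPath := by
      have hp' := hp
      rw [← hq12] at hp'
      exact hp'.of_append_left
    -- shortest split facts
    have hps' : walkWeight G w (q1.append (.cons hadj q2')) = wdist G w s t := by
      rw [hq12]; exact hps
    obtain ⟨hA, hB⟩ := split_shortest hw0 q1 (.cons hadj q2') hps'
    set P1 : G.Walk s x' := q1.append (.cons hadj .nil) with hP1
    have hP1p : P1.append q2' = p := by
      rw [hP1, ← Walk.append_assoc]
      simpa [Walk.cons_append, Walk.nil_append] using hq12
    have hps'' : walkWeight G w (P1.append q2') = wdist G w s t := by
      rw [hP1p]; exact hps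
    obtain ⟨hA', hB'⟩ := split_shortest hw0 P1 q2' hps''
    have hP1w : walkWeight G w P1 = walkWeight G w q1 + w v x' := by
      rw [hP1, walkWeight_append]
      simp; rfl
    have hP1path : P1.IsPath := by
      have hp' := hp
      rw [← hP1p] at hp'
      exact hp'.of_append_left
    have hP1e : ∀ e ∈ P1.edges, e ∈ T.edgeSet := fun e he =>
      hPT e (by rw [← hP1p, Walk.edges_append]; exact List.mem_append_left _ he)
    constructor
    · -- Part 1
      intro x0 hr
      obtain ⟨r⟩ := hr
      have hr'path : r.bypass.IsPath := r.bypass_isPath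
      set r' := r.bypass with hr'
      obtain ⟨rT, hrTw, hrTs⟩ := walk_mapLe (w := w) (delVerts_le (G := T) {v}) r'
      have hrTpath : rT.IsPath := by rw [Walk.isPath_def, hrTs]; exact hr'path.support_nodup
      have h1 : walkWeight T w rT = wdist T w s x0 := tree_path_weight hT hw0T hrTpath
      obtain ⟨rG, hrGw, _⟩ := walk_mapLe (w := w) (delVerts_mono hTG {v}) r'
      have key : walkWeight (delVerts G {v}) w rG = wdist G w s x0 := by
        rw [hrGw, ← hrTw, h1, hSPT]
      apply le_antisymm
      · rw [← key]; exact wdist_le hw0GD rG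
      · apply le_wdist rG
        intro q
        obtain ⟨qG, hqGw, _⟩ := walk_mapLe (w := w) (delVerts_le (G := G) {v}) q
        rw [← hqGw]
        exact wdist_le hw0 qG
    · -- Part 2
      intro y hr
      rw [hxu] at hr
      obtain ⟨r⟩ := hr
      have hr'path : r.bypass.IsPath := r.bypass_isPath
      set r' := r.bypass with hr'
      have hx'S : x' ∉ ({v} : Set V) := by
        simp only [Set.mem_singleton_iff]
        exact hvx.symm
      have hvr' : ∀ z ∈ r'.support, z ∉ ({v} : Set V) := delVerts_support_avoid r' hx'S
      obtain ⟨rT, hrTw, hrTs⟩ := walk_mapLe (w := w) (delVerts_le (G := T) {v}) r'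
      have hrTpath : rT.IsPath := by rw [Walk.isPath_def, hrTs]; exact hr'path.support_nodup
      obtain ⟨P1T, hP1Tw, hP1Ts⟩ := walk_transfer' (w := w) P1 hP1e
      have hP1Tpath : P1T.IsPath := by rw [Walk.isPath_def, hP1Ts]; exact hP1path.support_nodup
      have hP1sup : P1.support = q1.support ++ [x'] := by
        rw [hP1, Walk.support_append]
        simp
      have claim : ∀ z ∈ P1T.support, z ∈ rT.support → z = x' := by
        intro z hz1 hz2
        rw [hP1Ts, hP1sup] at hz1
        rw [hrTs] at hz2
        rcases List.mem_append.mp hz1 with hz1 | hz1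
        swap
        · simpa using hz1
        exfalso
        set d := q1.dropUntil z hz1 with hd
        have hdpath : d.IsPath := hq1path.dropUntil hz1
        have hcnpath : ((Walk.cons hadj (.nil : G.Walk x' x')) : G.Walk v x').IsPath := by
          rw [Walk.isPath_def]
          simp [hvx]
        have hpath1 : (d.append (.cons hadj .nil)).IsPath := by
          apply isPath_append_of_inter hdpath hcnpath
          intro z' hz1' hz2'
          have hz'q1 : z' ∈ q1.support := Walk.support_dropUntil_subset _ _ hz1'
          rcases (by simpa using hz2' : z' = v ∨ z' = x') with rfl | rfl
          · rfl
          · exact absurd hz'q1 hxq1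
        have hpe : ∀ e ∈ (d.append (.cons hadj (.nil : G.Walk x' x'))).edges, e ∈ T.edgeSet := by
          intro e he
          rw [Walk.edges_append] at he
          rcases List.mem_append.mp he with he | he
          · exact hPT e (by
              rw [← hq12, Walk.edges_append]
              exact List.mem_append_left _ (Walk.edges_dropUntil_subset _ _ he))
          · have he' : e = s(v, x') := by simpa using he
            subst he'
            exact hPT _ (by
              rw [← hq12, Walk.edges_append]
              exact List.mem_append_right _ (by simp [Walk.edges_cons]; exact Or.inl (Or.inl rfl)))
        obtain ⟨pT1, _, hpT1s⟩ := walk_transfer' (w := w) _ hpe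
        have hpT1path : pT1.IsPath := by
          rw [Walk.isPath_def, hpT1s]
          exact hpath1.support_nodup
        have hzrT : z ∈ rT.support := by rw [hrTs]; exact hz2
        have huniq : pT1.reverse = rT.takeUntil z hzrT :=
          (hT.existsUnique_path x' z).unique hpT1path.reverse (hrTpath.takeUntil hzrT)
        have hv1 : v ∈ pT1.reverse.support := by
          rw [Walk.support_reverse, List.mem_reverse, hpT1s]
          exact Walk.subset_support_append_left _ _ d.end_mem_support
        have hv2 : v ∉ (rT.takeUntil z hzrT).support := by
          intro h
          have hmem := Walk.support_takeUntil_subset _ hzrT h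
          rw [hrTs] at hmem
          exact hvr' v hmem rfl
        rw [huniq] at hv1
        exact hv2 hv1
      -- the big tree path and the distance formula
      have hbig : (P1T.append rT).IsPath := isPath_append_of_inter hP1Tpath hrTpath claim
      have hsy : wdist G w s y =
          walkWeight G w q1 + w v x' + walkWeight (delVerts T {v}) w r' := by
        rw [← hSPT y, ← tree_path_weight hT hw0T hbig, walkWeight_append, hP1Tw, hrTw, hP1w]
      rw [hA] at hsy
      obtain ⟨rGT, hrGTw, _⟩ :=
        walk_mapLe (w := w) (show delVerts T {v} ≤ G from fun _ _ h => hTG h.1) r'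
      have htri : wdist G w s y ≤ wdist G w s v + wdist G w v y :=
        wdist_triangle hw0 q1 (.cons hadj rGT)
      have hsymm : wdist G w v y = wdist G w y v := wdist_symm hw0 hws (.cons hadj rGT)
      have hkey : walkWeight (delVerts T {v}) w r' + w v x' ≤ wdist G w y v := by
        rw [← hsymm]
        linarith
      -- candidate walk in the deleted graph
      obtain ⟨c1, hc1w, _⟩ := walk_mapLe (w := w) (delVerts_mono hTG {v}) r'
      obtain ⟨c2, hc2w, _⟩ := walk_avoid (w := w) {v} q2' (by
        intro z hz
        simp only [Set.mem_singleton_iff]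
        rintro rfl
        exact hvq2' hz)
      set C : (delVerts G {v}).Walk y t := c1.reverse.append c2 with hC
      have hCw : walkWeight (delVerts G {v}) w C =
          walkWeight (delVerts T {v}) w r' + walkWeight G w q2' := by
        rw [hC, walkWeight_append, walkWeight_reverse hws, hc1w, hc2w]
      apply le_antisymm
      · obtain ⟨q0, _, _⟩ := walk_mapLe (w := w) (delVerts_le (G := G) {v}) C
        apply le_wdist q0
        intro q
        by_cases hvq : v ∈ q.support
        · have hqw : walkWeight G w (q.takeUntil v hvq) + walkWeight G w (q.dropUntil v hvq)
              = walkWeight G w q := by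
            rw [← walkWeight_append, Walk.take_spec]
          have h1 : wdist G w y v ≤ walkWeight G w (q.takeUntil v hvq) := wdist_le hw0 _
          have h2 : wdist G w v t ≤ walkWeight G w (q.dropUntil v hvq) := wdist_le hw0 _
          have h3 : wdist G w v t = w v x' + walkWeight G w q2' := by
            rw [← hB, walkWeight_cons]
          have h4 := wdist_le hw0GD C
          have h5 := hw0 v x' hadj
          rw [hCw] at h4
          linarith
        · obtain ⟨qd, hqdw, _⟩ := walk_avoid (w := w) {v} q (by
            intro z hz
            simp only [Set.mem_singleton_iff]
            rintro rfl
            exact hvq hz)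
          rw [← hqdw]
          exact wdist_le hw0GD qd
      · apply le_wdist C
        intro q
        obtain ⟨qG, hqGw, _⟩ := walk_mapLe (w := w) (delVerts_le (G := G) {v}) q
        rw [← hqGw]
        exact wdist_le hw0 qG
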